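/- (Good event, policy part.) Let S be a finite nonempty state space with |S| = S̄, and for each agent i ∈ {1,…,n} (n ≥ 2) a finite action set A^i, with joint action space A = A^1 × ⋯ × A^n and Ā = ∏_i |A^i|. Let π* be a joint policy such that for some π_min ∈ (0,1) every agent i satisfies π*^i(a^i|s) ∈ {0} ∪ [π_min, 1) for all (s,a^i). For each state s, let (a^s_t)_{t≥1} be i.i.d. A-valued random variables with law π*(·|s) (all mutually independent across states and times), and let π̂^i_k(a^i|s) be the empirical frequency of the value a^i among the agent-i components of a^s_1,…,a^s_k. For agent i and (s,a) ∈ S × A let E(s,a) be the condition 'π*^i(a^i|s) = 0 and π*^{-i}(a^{-i}|s) > 0' and Ê_k(s,a) the analogous condition for π̂_k. Then for δ ∈ (0,1), with probability at least 1 − δ/2, simultaneously for all k ≥ 1, all agents i, and all (s,a) ∈ S × A: |1_{E(s,a)} − 1_{Ê_k(s,a)}| ≤ 1{k ≤ max(1, ξ(k, δ/2))}, where ξ(k, δ/2) = log(2 S̄ Ā (n−1) k² / δ) / log(1/(1−π_min)). -/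

import Mathlib

open MeasureTheory ProbabilityTheory Finset
open scoped ENNReal

noncomputable section

/-- A probability vector on a finite type: nonnegative entries summing to 1. -/
def IsProbVec {X : Type*} [Fintype X] (p : X → ℝ) : Prop :=
  (∀ x, 0 ≤ p x) ∧ ∑ x, p x = 1

variable {n : ℕ} {S : Type*} {A : Fin n → Type*}

/-- The joint probability `π(a|s) = ∏ i, π^i(a^i|s)` of a joint policy. -/
def jointProb [∀ i, Fintype (A i)] (π : ∀ i : Fin n, S → A i → ℝ)
    (s : S) (a : ∀ i, A i) : ℝ :=
  ∏ i, π i s (a i)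

/-- The probability `π^{-i}(a^{-i}|s) = ∏_{j ≠ i} π^j(a^j|s)` assigned by all agents
except `i` to their components of the joint action `a`. -/
def exceptProb [∀ i, Fintype (A i)] (π : ∀ i : Fin n, S → A i → ℝ)
    (i : Fin n) (s : S) (a : ∀ i, A i) : ℝ :=
  ∏ j ∈ Finset.univ.erase i, π j s (a j)

/-- The empirical frequency `π̂^i_k(b|s)` of the action `b` among the agent-`i`
components of the first `k` samples `X s 1, …, X s k` of joint actions at state `s`. -/
def empPolicy {Ω : Type*} [∀ i, DecidableEq (A i)]
    (X : S → ℕ → Ω → ∀ i, A i) (i : Fin n) (k : ℕ) (s : S) (b : A i) (ω : Ω) : ℝ :=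
  (1 / (k : ℝ)) * ∑ t ∈ Finset.Icc 1 k, (if X s t ω i = b then (1 : ℝ) else 0)

set_option linter.unusedSectionVars false
set_option maxHeartbeats 1000000

section aux
variable [∀ i, Fintype (A i)] [∀ i, DecidableEq (A i)]

lemma aux_sum_fiber (π : ∀ i : Fin n, S → A i → ℝ) (hπ : ∀ i s, IsProbVec (π i s))
    (s : S) (j : Fin n) (b : A j) :
    ∑ a ∈ Finset.univ.filter (fun a : ∀ i, A i => a j = b), jointProb π s a = π j s b := by
  classical
  have hpi : Fintype.piFinset (Function.update (fun i => (Finset.univ : Finset (A i))) j {b})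
      = Finset.univ.filter (fun a : ∀ i, A i => a j = b) := by
    ext a
    simp only [Fintype.mem_piFinset, Finset.mem_filter, Finset.mem_univ, true_and]
    constructor
    · intro h
      have := h j
      simpa using this
    · intro h i
      rcases eq_or_ne i j with rfl | hij
      · simpa using h
      · simp [Function.update_of_ne hij]
  rw [← hpi]
  unfold jointProb
  rw [← Finset.prod_univ_sum]
  rw [Finset.prod_eq_single j]
  · simp
  · intro i _ hij
    rw [Function.update_of_ne hij]
    exact (hπ i s).2
  · simp

lemma aux_sum_total (π : ∀ i : Fin n, S → A i → ℝ) (hπ : ∀ i s, IsProbVec (π i s))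
    (s : S) : ∑ a : ∀ i, A i, jointProb π s a = 1 := by
  classical
  unfold jointProb
  rw [← Fintype.piFinset_univ, ← Finset.prod_univ_sum]
  exact Finset.prod_eq_one fun i _ => (hπ i s).2

end aux

section meas
variable [∀ i, Fintype (A i)] [∀ i, DecidableEq (A i)]
variable {Ω : Type*} [MeasurableSpace Ω]
  [MeasurableSpace (∀ i, A i)] [MeasurableSingletonClass (∀ i, A i)]

lemma aux_single (μ : Measure Ω)
    (π : ∀ i : Fin n, S → A i → ℝ) (hπ : ∀ i s, IsProbVec (π i s))
    (X : S → ℕ → Ω → ∀ i, A i)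
    (hlaw : ∀ s t a, μ (X s t ⁻¹' {a}) = ENNReal.ofReal (jointProb π s a))
    {πmin : ℝ} (s : S) (j : Fin n) (b : A j) (hb : πmin ≤ π j s b) (t : ℕ) :
    μ ((fun ω => X s t ω) ⁻¹' {a | a j ≠ b}) ≤ ENNReal.ofReal (1 - πmin) := by
  classical
  have hset : (fun ω => X s t ω) ⁻¹' {a | a j ≠ b}
      = ⋃ a ∈ Finset.univ.filter (fun a : ∀ i, A i => ¬ (a j = b)), X s t ⁻¹' {a} := by
    ext ω
    simp only [Set.mem_preimage, Set.mem_setOf_eq, Set.mem_iUnion, Finset.mem_filter,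
      Finset.mem_univ, true_and, Set.mem_singleton_iff]
    exact ⟨fun h => ⟨X s t ω, h, rfl⟩, fun ⟨a, h, he⟩ => by rw [he]; exact h⟩
  rw [hset]
  refine le_trans (measure_biUnion_finset_le _ _) ?_
  have hterm : ∀ a ∈ Finset.univ.filter (fun a : ∀ i, A i => ¬ (a j = b)),
      μ (X s t ⁻¹' {a}) = ENNReal.ofReal (jointProb π s a) := fun a _ => hlaw s t a
  rw [Finset.sum_congr rfl hterm,
    ← ENNReal.ofReal_sum_of_nonneg (fun a _ => by
      unfold jointProb; exact Finset.prod_nonneg fun i _ => (hπ i s).1 _)]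
  apply ENNReal.ofReal_le_ofReal
  have hsplit := Finset.sum_filter_add_sum_filter_not Finset.univ
    (fun a : ∀ i, A i => a j = b) (jointProb π s)
  have h1 := aux_sum_fiber π hπ s j b
  have h2 := aux_sum_total π hπ s
  have : ∑ a ∈ Finset.univ.filter (fun a : ∀ i, A i => ¬ (a j = b)), jointProb π s a
      = 1 - π j s b := by
    rw [← h1] at *
    linarith [hsplit, h2]
  rw [this]
  linarith

lemma aux_indep_bound (μ : Measure Ω)
    (π : ∀ i : Fin n, S → A i → ℝ) (hπ : ∀ i s, IsProbVec (π i s))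
    (X : S → ℕ → Ω → ∀ i, A i)
    (hlaw : ∀ s t a, μ (X s t ⁻¹' {a}) = ENNReal.ofReal (jointProb π s a))
    (hindep : iIndepFun (fun p : S × ℕ => X p.1 p.2) μ)
    {πmin : ℝ} (hπm : 0 ≤ 1 - πmin)
    (s : S) (j : Fin n) (b : A j) (hb : πmin ≤ π j s b) (k : ℕ) :
    μ {ω | ∀ t ∈ Finset.Icc 1 k, X s t ω j ≠ b} ≤ ENNReal.ofReal ((1 - πmin) ^ k) := by
  classical
  set F : Finset (S × ℕ) := (Finset.Icc 1 k).image (fun t => (s, t)) with hF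
  have hmeasSet : MeasurableSet ({a : ∀ i, A i | a j ≠ b}) := (Set.toFinite _).measurableSet
  have hprod := hindep.meas_biInter (S := F)
    (s := fun p => (fun ω => X p.1 p.2 ω) ⁻¹' {a | a j ≠ b})
    (fun p _ => ⟨{a | a j ≠ b}, hmeasSet, rfl⟩)
  have hseteq : (⋂ p ∈ F, (fun ω => X p.1 p.2 ω) ⁻¹' {a | a j ≠ b})
      = {ω | ∀ t ∈ Finset.Icc 1 k, X s t ω j ≠ b} := by
    ext ω
    simp [hF]
  rw [← hseteq, hprod]
  rw [Finset.prod_image (fun x _ y _ h => by simpa using (Prod.mk.injEq s x s y ▸ h : (s, x) = (s, y)))]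
  calc ∏ t ∈ Finset.Icc 1 k, μ ((fun ω => X s t ω) ⁻¹' {a | a j ≠ b})
      ≤ ∏ _t ∈ Finset.Icc 1 k, ENNReal.ofReal (1 - πmin) :=
        Finset.prod_le_prod' (fun t _ => aux_single μ π hπ X hlaw s j b hb t)
    _ = ENNReal.ofReal (1 - πmin) ^ k := by
        rw [Finset.prod_const, Nat.card_Icc]; norm_num
    _ = ENNReal.ofReal ((1 - πmin) ^ k) := (ENNReal.ofReal_pow hπm k).symm

end meas

lemma aux_card_sum_le {n : ℕ} (hn : 2 ≤ n) (c : Fin n → ℕ) (hc : ∀ j, 2 ≤ c j) :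
    ∑ j, c j ≤ (n - 1) * ∏ j, c j := by
  have key : ∀ j : Fin n, 2 ^ (n - 1) * c j ≤ ∏ i, c i := by
    intro j
    have h1 : 2 ^ (n - 1) ≤ ∏ i ∈ Finset.univ.erase j, c i := by
      calc 2 ^ (n - 1) = ∏ _i ∈ Finset.univ.erase j, 2 := by
            rw [Finset.prod_const, Finset.card_erase_of_mem (Finset.mem_univ j),
              Finset.card_univ, Fintype.card_fin]
        _ ≤ ∏ i ∈ Finset.univ.erase j, c i :=
            Finset.prod_le_prod' fun i _ => hc i
    calc 2 ^ (n - 1) * c j ≤ (∏ i ∈ Finset.univ.erase j, c i) * c j :=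
          Nat.mul_le_mul_right _ h1
      _ = ∏ i, c i := by
          rw [mul_comm]
          exact Finset.mul_prod_erase Finset.univ c (Finset.mem_univ j)
  have h2 : 2 ^ (n - 1) * ∑ j, c j ≤ n * ∏ i, c i := by
    rw [Finset.mul_sum]
    calc ∑ j, 2 ^ (n - 1) * c j ≤ ∑ _j : Fin n, ∏ i, c i :=
          Finset.sum_le_sum fun j _ => key j
      _ = n * ∏ i, c i := by
          rw [Finset.sum_const, Finset.card_univ, Fintype.card_fin, smul_eq_mul]
  have h3 : n * ∏ i, c i ≤ 2 ^ (n - 1) * ((n - 1) * ∏ i, c i) := by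
    have hn2 : 2 ≤ 2 ^ (n - 1) := by
      calc 2 = 2 ^ 1 := rfl
        _ ≤ 2 ^ (n - 1) := Nat.pow_le_pow_right (by norm_num) (by omega)
    calc n * ∏ i, c i ≤ 2 * (n - 1) * ∏ i, c i :=
          Nat.mul_le_mul_right _ (by omega)
      _ ≤ 2 ^ (n - 1) * (n - 1) * ∏ i, c i :=
          Nat.mul_le_mul_right _ (Nat.mul_le_mul_right _ hn2)
      _ = 2 ^ (n - 1) * ((n - 1) * ∏ i, c i) := by ring
  exact Nat.le_of_mul_le_mul_left (le_trans h2 h3) (Nat.pow_pos (by norm_num))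

lemma aux_tele_id (m : ℕ) :
    ∑ k ∈ Finset.range (m + 2), (if 2 ≤ k then (1 : ℝ) / (((k : ℝ) - 1) * k) else 0)
      = 1 - 1 / ((m : ℝ) + 1) := by
  induction m with
  | zero => simp [Finset.sum_range_succ]
  | succ m ih =>
    rw [Finset.sum_range_succ, ih, if_pos (by omega : 2 ≤ m + 2)]
    have hm0 : ((m : ℝ) + 1) ≠ 0 := by positivity
    have hm2 : ((m : ℝ) + 2) ≠ 0 := by positivity
    push_cast
    have e1 : ((m : ℝ) + 2 - 1) = (m : ℝ) + 1 := by ring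
    rw [e1]
    have key : (1 : ℝ) / (((m : ℝ) + 1) * ((m : ℝ) + 2))
        = 1 / ((m : ℝ) + 1) - 1 / ((m : ℝ) + 2) := by
      rw [div_sub_div _ _ hm0 hm2]
      congr 1
      ring
    rw [key]
    ring

lemma aux_tele_le (N : ℕ) :
    ∑ k ∈ Finset.range N, (if 2 ≤ k then (1 : ℝ) / (((k : ℝ) - 1) * k) else 0) ≤ 1 := by
  have hsub : Finset.range N ⊆ Finset.range (N + 2) := Finset.range_subset_range.mpr (by omega)
  refine le_trans (Finset.sum_le_sum_of_subset_of_nonneg hsub fun k _ _ => ?_) ?_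
  · split_ifs with h
    · have hk : (2 : ℝ) ≤ (k : ℝ) := by exact_mod_cast h
      apply div_nonneg (by norm_num)
      nlinarith
    · exact le_rfl
  · rw [aux_tele_id N]
    have : 0 ≤ 1 / ((N : ℝ) + 1) := by positivity
    linarith

lemma aux_two_le_card [∀ i, Fintype (A i)] [Nonempty S] [∀ i, Nonempty (A i)]
    (π : ∀ i : Fin n, S → A i → ℝ) (hπ : ∀ i s, IsProbVec (π i s))
    {πmin : ℝ}
    (hsupp : ∀ (i : Fin n) (s : S) (b : A i),
      π i s b = 0 ∨ (πmin ≤ π i s b ∧ π i s b < 1))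
    (j : Fin n) : 2 ≤ Fintype.card (A j) := by
  by_contra h
  have h1 : Fintype.card (A j) = 1 := le_antisymm (by omega) Fintype.card_pos
  obtain ⟨b, hb⟩ := Fintype.card_eq_one_iff.mp h1
  obtain ⟨s⟩ := ‹Nonempty S›
  have huniv : (Finset.univ : Finset (A j)) = {b} := by
    ext x; simp [hb x]
  have hsum := (hπ j s).2
  rw [huniv, Finset.sum_singleton] at hsum
  rcases hsupp j s b with h0 | ⟨_, hlt⟩
  · rw [h0] at hsum; norm_num at hsum
  · linarith

/-- Good event, policy part: with i.i.d. joint-action samples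
`a^s_t ~ π*(·|s)` (mutually independent over states and times), empirical policies
`π̂^i_k`, and the events `E(s,a)`, `Ê_k(s,a)` as in the explicit reward characterization,
with probability at least `1 − δ/2`, simultaneously for all `k ≥ 1`, agents `i` and
`(s,a)`: `|1_{E(s,a)} − 1_{Ê_k(s,a)}| ≤ 1{k ≤ max(1, ξ(k, δ/2))}`, where
`ξ(k, δ/2) = log(2 S̄ Ā (n−1) k² / δ) / log(1/(1−π_min))`. -/
theorem stmt15 {Ω : Type*} [MeasurableSpace Ω] (μ : Measure Ω) [IsProbabilityMeasure μ]
    (hn : 2 ≤ n) [Fintype S] [Nonempty S]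
    [∀ i, Fintype (A i)] [∀ i, Nonempty (A i)] [∀ i, DecidableEq (A i)]
    [MeasurableSpace (∀ i, A i)] [MeasurableSingletonClass (∀ i, A i)]
    (π : ∀ i : Fin n, S → A i → ℝ) (hπ : ∀ i s, IsProbVec (π i s))
    (πmin : ℝ) (hπmin : πmin ∈ Set.Ioo (0 : ℝ) 1)
    (hsupp : ∀ (i : Fin n) (s : S) (b : A i),
      π i s b = 0 ∨ (πmin ≤ π i s b ∧ π i s b < 1))
    (X : S → ℕ → Ω → ∀ i, A i)
    (hmeas : ∀ s t, Measurable (X s t))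
    (hlaw : ∀ s t a, μ (X s t ⁻¹' {a}) = ENNReal.ofReal (jointProb π s a))
    (hindep : iIndepFun
      (fun p : S × ℕ => X p.1 p.2) μ)
    (δ : ℝ) (hδ : δ ∈ Set.Ioo (0 : ℝ) 1) :
    ENNReal.ofReal (1 - δ / 2) ≤
      μ {ω | ∀ k : ℕ, 1 ≤ k → ∀ (i : Fin n) (s : S) (a : ∀ j, A j),
        |(if π i s (a i) = 0 ∧ 0 < exceptProb π i s a then (1 : ℝ) else 0) -
            (if empPolicy X i k s (a i) ω = 0 ∧
                0 < ∏ j ∈ Finset.univ.erase i, empPolicy X j k s (a j) ω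
              then (1 : ℝ) else 0)| ≤
          (if (k : ℝ) ≤ max 1
              (Real.log (2 * (Fintype.card S : ℝ) * (∏ i, (Fintype.card (A i) : ℝ)) *
                  ((n : ℝ) - 1) * (k : ℝ) ^ 2 / δ) /
                Real.log (1 / (1 - πmin)))
            then (1 : ℝ) else 0)} := by
  classical
  obtain ⟨hδ0, hδ1⟩ := hδ
  obtain ⟨hπ0, hπ1⟩ := hπmin
  have hpm1 : (0:ℝ) < 1 - πmin := by linarith
  have hL : 0 < Real.log (1 / (1 - πmin)) :=
    Real.log_pos (by rw [lt_div_iff₀ hpm1]; linarith)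
  have hS0 : (0:ℝ) < (Fintype.card S : ℝ) := by exact_mod_cast Fintype.card_pos
  have hA0 : (0:ℝ) < ∏ i, (Fintype.card (A i) : ℝ) :=
    Finset.prod_pos fun i _ => by exact_mod_cast Fintype.card_pos
  have hn1 : (1:ℝ) < (n:ℝ) := by exact_mod_cast (by omega : 1 < n)
  -- the exponential numeric estimate
  have hexp : ∀ k : ℕ,
      ¬ ((k : ℝ) ≤ max 1
          (Real.log (2 * (Fintype.card S : ℝ) * (∏ i, (Fintype.card (A i) : ℝ)) *
              ((n : ℝ) - 1) * (k : ℝ) ^ 2 / δ) /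
            Real.log (1 / (1 - πmin)))) →
      2 ≤ k ∧ (Fintype.card S : ℝ) * (((n:ℝ) - 1) * ∏ i, (Fintype.card (A i) : ℝ)) *
          (1 - πmin) ^ k ≤ δ / 2 * (1 / (((k:ℝ) - 1) * k)) := by
    intro k hR
    push_neg at hR
    obtain ⟨h1k, hξk⟩ := max_lt_iff.mp hR
    have hk2 : 2 ≤ k := by exact_mod_cast (by exact_mod_cast Nat.one_lt_cast.mp h1k : 2 ≤ (k:ℕ))
    have hk0 : (0:ℝ) < k := by linarith
    have hkR : (2:ℝ) ≤ (k:ℝ) := by exact_mod_cast hk2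
    have hnn : (0:ℝ) < (n:ℝ) - 1 := by linarith
    refine ⟨hk2, ?_⟩
    have hN0 : (0:ℝ) < 2 * (Fintype.card S : ℝ) * (∏ i, (Fintype.card (A i) : ℝ)) *
        ((n : ℝ) - 1) * (k : ℝ) ^ 2 := by
      have : (0:ℝ) < (k:ℝ)^2 := by positivity
      nlinarith [mul_pos (mul_pos (mul_pos (mul_pos two_pos hS0) hA0) hnn) this]
    have harg : (0:ℝ) < 2 * (Fintype.card S : ℝ) * (∏ i, (Fintype.card (A i) : ℝ)) *
        ((n : ℝ) - 1) * (k : ℝ) ^ 2 / δ := div_pos hN0 hδ0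
    have hlog : Real.log (2 * (Fintype.card S : ℝ) * (∏ i, (Fintype.card (A i) : ℝ)) *
        ((n : ℝ) - 1) * (k : ℝ) ^ 2 / δ) < (k:ℝ) * Real.log (1 / (1 - πmin)) :=
      (div_lt_iff₀ hL).mp hξk
    have hpow : (1 - πmin) ^ k < δ / (2 * (Fintype.card S : ℝ) * (∏ i, (Fintype.card (A i) : ℝ)) *
        ((n : ℝ) - 1) * (k : ℝ) ^ 2) := by
      have hexp1 : (1 - πmin) ^ k = Real.exp ((k:ℝ) * Real.log (1 - πmin)) := by
        conv_lhs => rw [← Real.exp_log hpm1]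
        rw [← Real.exp_nat_mul]
      have hL' : Real.log (1 / (1 - πmin)) = - Real.log (1 - πmin) := by
        rw [one_div, Real.log_inv]
      rw [hL'] at hlog
      have h2 : (k:ℝ) * Real.log (1 - πmin) <
          - Real.log (2 * (Fintype.card S : ℝ) * (∏ i, (Fintype.card (A i) : ℝ)) *
            ((n : ℝ) - 1) * (k : ℝ) ^ 2 / δ) := by nlinarith [hlog]
      calc (1 - πmin) ^ k = Real.exp ((k:ℝ) * Real.log (1 - πmin)) := hexp1
        _ < Real.exp (- Real.log (2 * (Fintype.card S : ℝ) * (∏ i, (Fintype.card (A i) : ℝ)) *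
            ((n : ℝ) - 1) * (k : ℝ) ^ 2 / δ)) := Real.exp_lt_exp.mpr h2
        _ = (2 * (Fintype.card S : ℝ) * (∏ i, (Fintype.card (A i) : ℝ)) *
            ((n : ℝ) - 1) * (k : ℝ) ^ 2 / δ)⁻¹ := by
            rw [Real.exp_neg, Real.exp_log harg]
        _ = δ / (2 * (Fintype.card S : ℝ) * (∏ i, (Fintype.card (A i) : ℝ)) *
            ((n : ℝ) - 1) * (k : ℝ) ^ 2) := inv_div _ _
    have hfac0 : (0:ℝ) ≤ (Fintype.card S : ℝ) * (((n:ℝ) - 1) * ∏ i, (Fintype.card (A i) : ℝ)) := by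
      positivity
    calc (Fintype.card S : ℝ) * (((n:ℝ) - 1) * ∏ i, (Fintype.card (A i) : ℝ)) * (1 - πmin) ^ k
        ≤ (Fintype.card S : ℝ) * (((n:ℝ) - 1) * ∏ i, (Fintype.card (A i) : ℝ)) *
          (δ / (2 * (Fintype.card S : ℝ) * (∏ i, (Fintype.card (A i) : ℝ)) *
            ((n : ℝ) - 1) * (k : ℝ) ^ 2)) := mul_le_mul_of_nonneg_left hpow.le hfac0
      _ = δ / (2 * (k:ℝ)^2) := by
          field_simp
      _ ≤ δ / 2 * (1 / (((k:ℝ) - 1) * k)) := by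
          rw [mul_one_div, div_div]
          apply div_le_div_of_nonneg_left hδ0.le
          · nlinarith
          · nlinarith
  -- Bad sets
  set Bad1 : Set Ω := ⋃ (s : S) (t : ℕ) (j : Fin n), {ω | π j s (X s t ω j) = 0} with hBad1
  set Bad2 : Set Ω := ⋃ (k : ℕ) (s : S) (j : Fin n) (b : A j),
      {ω | (¬ ((k : ℝ) ≤ max 1
          (Real.log (2 * (Fintype.card S : ℝ) * (∏ i, (Fintype.card (A i) : ℝ)) *
              ((n : ℝ) - 1) * (k : ℝ) ^ 2 / δ) /
            Real.log (1 / (1 - πmin)))) ∧ πmin ≤ π j s b)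
        ∧ ∀ t ∈ Finset.Icc 1 k, X s t ω j ≠ b} with hBad2
  have hB1 : μ Bad1 = 0 := by
    rw [hBad1]
    refine measure_iUnion_null fun s => measure_iUnion_null fun t => measure_iUnion_null fun j => ?_
    have hset : {ω | π j s (X s t ω j) = 0}
        = ⋃ (a : ∀ i, A i) (_ : π j s (a j) = 0), X s t ⁻¹' {a} := by
      ext ω
      simp only [Set.mem_setOf_eq, Set.mem_iUnion, Set.mem_preimage, Set.mem_singleton_iff]
      exact ⟨fun h => ⟨X s t ω, h, rfl⟩, fun ⟨a, h, he⟩ => by rw [he]; exact h⟩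
    rw [hset]
    refine measure_iUnion_null fun a => ?_
    by_cases h : π j s (a j) = 0
    · have he : (⋃ (_ : π j s (a j) = 0), X s t ⁻¹' {a}) = X s t ⁻¹' {a} := by
        simp [h]
      rw [he, hlaw]
      have : jointProb π s a = 0 := Finset.prod_eq_zero (Finset.mem_univ j) h
      rw [this, ENNReal.ofReal_zero]
    · have he : (⋃ (_ : π j s (a j) = 0), X s t ⁻¹' {a}) = (∅ : Set Ω) := by
        simp [h]
      rw [he]
      exact measure_empty
  have hB2 : μ Bad2 ≤ ENNReal.ofReal (δ / 2) := by
    have hk_union : ∀ k : ℕ,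
        μ (⋃ (s : S) (j : Fin n) (b : A j),
          {ω | (¬ ((k : ℝ) ≤ max 1
          (Real.log (2 * (Fintype.card S : ℝ) * (∏ i, (Fintype.card (A i) : ℝ)) *
              ((n : ℝ) - 1) * (k : ℝ) ^ 2 / δ) /
            Real.log (1 / (1 - πmin)))) ∧ πmin ≤ π j s b)
            ∧ ∀ t ∈ Finset.Icc 1 k, X s t ω j ≠ b})
        ≤ (if 2 ≤ k then ENNReal.ofReal (δ / 2 * (1 / (((k:ℝ) - 1) * k))) else 0) := by
      intro k
      by_cases hR : ((k : ℝ) ≤ max 1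
          (Real.log (2 * (Fintype.card S : ℝ) * (∏ i, (Fintype.card (A i) : ℝ)) *
              ((n : ℝ) - 1) * (k : ℝ) ^ 2 / δ) /
            Real.log (1 / (1 - πmin))))
      · refine le_trans (measure_mono (show _ ⊆ (∅ : Set Ω) from fun ω hω => ?_)) (by simp)
        simp only [Set.mem_iUnion] at hω
        obtain ⟨s, j, b, hω⟩ := hω
        exact (hω.1.1 hR).elim
      · obtain ⟨hk2, hnum⟩ := hexp k hR
        rw [if_pos hk2]
        have hsjb : ∀ (s : S) (j : Fin n) (b : A j),
            μ {ω | (¬ ((k : ℝ) ≤ max 1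
          (Real.log (2 * (Fintype.card S : ℝ) * (∏ i, (Fintype.card (A i) : ℝ)) *
              ((n : ℝ) - 1) * (k : ℝ) ^ 2 / δ) /
            Real.log (1 / (1 - πmin)))) ∧ πmin ≤ π j s b)
              ∧ ∀ t ∈ Finset.Icc 1 k, X s t ω j ≠ b} ≤ ENNReal.ofReal ((1 - πmin) ^ k) := by
          intro s j b
          by_cases hb : πmin ≤ π j s b
          · exact le_trans (measure_mono fun ω hω => hω.2)
              (aux_indep_bound μ π hπ X hlaw hindep (by linarith) s j b hb k)
          · exact le_trans (measure_mono (show _ ⊆ (∅ : Set Ω) from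
              fun ω hω => (hb hω.1.2).elim)) (by simp)
        refine le_trans (measure_iUnion_fintype_le _ _) ?_
        refine le_trans (Finset.sum_le_sum fun s _ => measure_iUnion_fintype_le _ _) ?_
        refine le_trans (Finset.sum_le_sum fun s _ => Finset.sum_le_sum fun j _ =>
          measure_iUnion_fintype_le _ _) ?_
        refine le_trans (Finset.sum_le_sum fun s _ => Finset.sum_le_sum fun j _ =>
          Finset.sum_le_sum fun b _ => hsjb s j b) ?_
        have hcount : ∀ s : S, ∀ j : Fin n, (∑ _b : A j, ENNReal.ofReal ((1 - πmin) ^ k))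
            = (Fintype.card (A j) : ℝ≥0∞) * ENNReal.ofReal ((1 - πmin) ^ k) := by
          intro s j
          rw [Finset.sum_const, Finset.card_univ, nsmul_eq_mul]
        calc (∑ s : S, ∑ j : Fin n, ∑ _b : A j, ENNReal.ofReal ((1 - πmin) ^ k))
            = (Fintype.card S : ℝ≥0∞) * ((∑ j : Fin n, (Fintype.card (A j) : ℝ≥0∞)) *
              ENNReal.ofReal ((1 - πmin) ^ k)) := by
              rw [Finset.sum_congr rfl (fun s _ => Finset.sum_congr rfl (fun j _ => hcount s j)),
                Finset.sum_congr rfl (fun s _ => (Finset.sum_mul _ _ _).symm),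
                Finset.sum_const, Finset.card_univ, nsmul_eq_mul]
          _ = ((Fintype.card S * ∑ j, Fintype.card (A j) : ℕ) : ℝ≥0∞) *
              ENNReal.ofReal ((1 - πmin) ^ k) := by
              push_cast
              ring
          _ ≤ ((Fintype.card S * ((n - 1) * ∏ j, Fintype.card (A j)) : ℕ) : ℝ≥0∞) *
              ENNReal.ofReal ((1 - πmin) ^ k) := by
              refine mul_le_mul_left ?_ _
              refine Nat.cast_le.mpr (Nat.mul_le_mul_left _ ?_)
              exact aux_card_sum_le hn _ (fun j => aux_two_le_card π hπ hsupp j)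
          _ = ENNReal.ofReal (((Fintype.card S * ((n - 1) * ∏ j, Fintype.card (A j)) : ℕ) : ℝ) *
              (1 - πmin) ^ k) := by
              rw [ENNReal.ofReal_mul (Nat.cast_nonneg _), ENNReal.ofReal_natCast]
          _ ≤ ENNReal.ofReal (δ / 2 * (1 / (((k:ℝ) - 1) * k))) := by
              apply ENNReal.ofReal_le_ofReal
              have hcast : ((Fintype.card S * ((n - 1) * ∏ j, Fintype.card (A j)) : ℕ) : ℝ)
                  = (Fintype.card S : ℝ) * (((n:ℝ) - 1) * ∏ i, (Fintype.card (A i) : ℝ)) := by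
                push_cast [Nat.cast_sub (by omega : 1 ≤ n)]
                ring
              rw [hcast]
              exact hnum
    rw [hBad2]
    refine le_trans (measure_iUnion_le _) ?_
    refine le_trans (ENNReal.tsum_le_tsum hk_union) ?_
    have heq : ∀ k : ℕ, (if 2 ≤ k then ENNReal.ofReal (δ / 2 * (1 / (((k:ℝ) - 1) * k))) else 0)
        = ENNReal.ofReal (δ / 2) * (if 2 ≤ k then ENNReal.ofReal (1 / (((k:ℝ) - 1) * k)) else 0) := by
      intro k
      split_ifs with h
      · rw [← ENNReal.ofReal_mul (by linarith)]
      · rw [mul_zero]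
    rw [tsum_congr heq, ENNReal.tsum_mul_left]
    have hr : ∑' k : ℕ, (if 2 ≤ k then ENNReal.ofReal (1 / (((k:ℝ) - 1) * k)) else 0) ≤ 1 := by
      rw [ENNReal.tsum_eq_iSup_sum]
      refine iSup_le fun F => ?_
      obtain ⟨N, hN⟩ := F.exists_nat_subset_range
      refine le_trans (Finset.sum_le_sum_of_subset hN) ?_
      have heq2 : ∀ k ∈ Finset.range N, (if 2 ≤ k then ENNReal.ofReal (1 / (((k:ℝ) - 1) * k)) else 0)
          = ENNReal.ofReal (if 2 ≤ k then 1 / (((k:ℝ) - 1) * k) else 0) := by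
        intro k _
        split_ifs <;> simp
      have hnn : ∀ k ∈ Finset.range N, 0 ≤ (if 2 ≤ k then 1 / (((k:ℝ) - 1) * k) else 0) := by
        intro k _
        split_ifs with h
        · have hk : (2:ℝ) ≤ (k:ℝ) := by exact_mod_cast h
          apply div_nonneg (by norm_num)
          nlinarith
        · exact le_rfl
      rw [Finset.sum_congr rfl heq2, ← ENNReal.ofReal_sum_of_nonneg hnn]
      calc ENNReal.ofReal (∑ k ∈ Finset.range N, if 2 ≤ k then 1 / (((k:ℝ) - 1) * k) else 0)
          ≤ ENNReal.ofReal 1 := ENNReal.ofReal_le_ofReal (aux_tele_le N)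
        _ = 1 := ENNReal.ofReal_one
    calc ENNReal.ofReal (δ / 2) * ∑' k : ℕ, (if 2 ≤ k then ENNReal.ofReal (1 / (((k:ℝ) - 1) * k)) else 0)
        ≤ ENNReal.ofReal (δ / 2) * 1 := mul_le_mul_right hr _
      _ = ENNReal.ofReal (δ / 2) := mul_one _
  have hsubset : (Bad1 ∪ Bad2)ᶜ ⊆ {ω : Ω | ∀ k : ℕ, 1 ≤ k → ∀ (i : Fin n) (s : S) (a : ∀ j, A j),
        |(if π i s (a i) = 0 ∧ 0 < exceptProb π i s a then (1 : ℝ) else 0) -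
            (if empPolicy X i k s (a i) ω = 0 ∧
                0 < ∏ j ∈ Finset.univ.erase i, empPolicy X j k s (a j) ω
              then (1 : ℝ) else 0)| ≤
          (if (k : ℝ) ≤ max 1
              (Real.log (2 * (Fintype.card S : ℝ) * (∏ i, (Fintype.card (A i) : ℝ)) *
                  ((n : ℝ) - 1) * (k : ℝ) ^ 2 / δ) /
                Real.log (1 / (1 - πmin)))
            then (1 : ℝ) else 0)} := by
    intro ω hω
    simp only [Set.mem_compl_iff, Set.mem_union, not_or] at hω
    obtain ⟨hω1, hω2⟩ := hω
    rw [hBad1] at hω1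
    rw [hBad2] at hω2
    simp only [Set.mem_iUnion, not_exists, Set.mem_setOf_eq] at hω1 hω2
    intro k hk i s a
    have hall : ¬ ((k : ℝ) ≤ max 1
          (Real.log (2 * (Fintype.card S : ℝ) * (∏ i, (Fintype.card (A i) : ℝ)) *
              ((n : ℝ) - 1) * (k : ℝ) ^ 2 / δ) /
            Real.log (1 / (1 - πmin)))) →
        ((π i s (a i) = 0 ∧ 0 < exceptProb π i s a) ↔
         (empPolicy X i k s (a i) ω = 0 ∧
          0 < ∏ j ∈ Finset.univ.erase i, empPolicy X j k s (a j) ω)) := by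
      intro hR
      have hk2 : 2 ≤ k := (hexp k hR).1
      have hk0 : (0:ℝ) < (k:ℝ) := by
        have : 0 < k := by omega
        exact_mod_cast this
      have hA : ∀ (j : Fin n) (b : A j), π j s b = 0 → empPolicy X j k s b ω = 0 := by
        intro j b h0
        unfold empPolicy
        have hz : (∑ t ∈ Finset.Icc 1 k, if X s t ω j = b then (1:ℝ) else 0) = 0 :=
          Finset.sum_eq_zero fun t _ => if_neg (fun heq => hω1 s t j (by rw [heq]; exact h0))
        rw [hz, mul_zero]
      have hpos : ∀ (j : Fin n) (b : A j), π j s b ≠ 0 → 0 < empPolicy X j k s b ω := by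
        intro j b h0
        have hb : πmin ≤ π j s b := by
          rcases hsupp j s b with h | h
          · exact absurd h h0
          · exact h.1
        have h2 := hω2 k s j b
        push_neg at h2
        obtain ⟨t, ht, hXt⟩ := h2 ⟨not_le.mp hR, hb⟩
        unfold empPolicy
        apply mul_pos (by positivity)
        refine Finset.sum_pos' (fun t' _ => by split_ifs <;> norm_num) ⟨t, ht, ?_⟩
        rw [if_pos hXt]
        norm_num
      constructor
      · rintro ⟨h1, h2⟩
        refine ⟨hA i _ h1, Finset.prod_pos fun j hj => ?_⟩
        apply hpos
        intro h0
        have hzero : exceptProb π i s a = 0 := Finset.prod_eq_zero hj h0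
        rw [hzero] at h2
        exact lt_irrefl 0 h2
      · rintro ⟨h1, h2⟩
        constructor
        · by_contra h0
          exact absurd h1 (ne_of_gt (hpos i _ h0))
        · unfold exceptProb
          apply Finset.prod_pos
          intro j hj
          rcases ((hπ j s).1 (a j)).lt_or_eq with h | h
          · exact h
          · exfalso
            have h0 := hA j (a j) h.symm
            rw [Finset.prod_eq_zero hj h0] at h2
            exact lt_irrefl 0 h2
    by_cases hR : ((k : ℝ) ≤ max 1
          (Real.log (2 * (Fintype.card S : ℝ) * (∏ i, (Fintype.card (A i) : ℝ)) *
              ((n : ℝ) - 1) * (k : ℝ) ^ 2 / δ) /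
            Real.log (1 / (1 - πmin))))
    · rw [if_pos hR]
      split_ifs <;> norm_num
    · rw [if_neg hR]
      by_cases hP : (π i s (a i) = 0 ∧ 0 < exceptProb π i s a)
      · rw [if_pos hP, if_pos ((hall hR).mp hP), sub_self, abs_zero]
      · rw [if_neg hP, if_neg (fun hQ => hP ((hall hR).mpr hQ)), sub_self, abs_zero]
  refine le_trans ?_ (measure_mono hsubset)
  have hBad : μ (Bad1 ∪ Bad2) ≤ ENNReal.ofReal (δ / 2) :=
    le_trans (measure_union_le _ _) (by rw [hB1, zero_add]; exact hB2)
  have h1 : (1 : ℝ≥0∞) ≤ μ (Bad1 ∪ Bad2)ᶜ + μ (Bad1 ∪ Bad2) := by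
    have h := measure_union_le (μ := μ) (Bad1 ∪ Bad2)ᶜ (Bad1 ∪ Bad2)
    rw [Set.compl_union_self, measure_univ] at h
    exact h
  calc ENNReal.ofReal (1 - δ / 2) = 1 - ENNReal.ofReal (δ / 2) := by
        rw [ENNReal.ofReal_sub _ (by linarith), ENNReal.ofReal_one]
    _ ≤ 1 - μ (Bad1 ∪ Bad2) := tsub_le_tsub_left hBad _
    _ ≤ μ (Bad1 ∪ Bad2)ᶜ := tsub_le_iff_right.mpr h1
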